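/- Let A ∈ ℝ^{n×n} be row-stochastic, irreducible and aperiodic, and let W ∈ ℝ^{d×d} have operator norm strictly less than 1. Then the iteration H^{(l+1)} = A H^{(l)} W converges to the zero matrix for every initial H^{(0)} ∈ ℝ^{n×d}. -/

import Mathlib

open Filter Matrix Topology

/-- Powers of a row-stochastic nonnegative matrix are nonnegative. -/
lemma pow_nonneg_entries {n : ℕ} (A : Matrix (Fin n) (Fin n) ℝ)
    (hnonneg : ∀ i j, 0 ≤ A i j) (l : ℕ) : ∀ i j, 0 ≤ (A ^ l) i j := by
  induction l with
  | zero => intro i j; simp [Matrix.one_apply]; positivity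
  | succ l ih =>
    intro i j
    rw [pow_succ, Matrix.mul_apply]
    exact Finset.sum_nonneg fun k _ => mul_nonneg (ih i k) (hnonneg k j)

lemma pow_row_sum {n : ℕ} (A : Matrix (Fin n) (Fin n) ℝ)
    (hrow : ∀ i, ∑ j, A i j = 1) (l : ℕ) : ∀ i, ∑ j, (A ^ l) i j = 1 := by
  induction l with
  | zero => intro i; simp [Matrix.one_apply]
  | succ l ih =>
    intro i
    simp only [pow_succ, Matrix.mul_apply]
    rw [Finset.sum_comm]
    simp_rw [← Finset.mul_sum, hrow]
    simpa using ih i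

lemma coord_le_norm {d : ℕ} (x : EuclideanSpace ℝ (Fin d)) (i : Fin d) :
    |x i| ≤ ‖x‖ := by
  rw [EuclideanSpace.norm_eq]
  have : |x i| = Real.sqrt (‖x i‖ ^ 2) := by
    rw [Real.sqrt_sq_eq_abs]; simp
  rw [this]
  apply Real.sqrt_le_sqrt
  exact Finset.single_le_sum (f := fun j => ‖x j‖ ^ 2) (fun j _ => by positivity) (Finset.mem_univ i)

lemma entry_le_l2norm {d : ℕ} (M : Matrix (Fin d) (Fin d) ℝ) (i j : Fin d) :
    |M i j| ≤ ‖Matrix.toEuclideanCLM (𝕜 := ℝ) M‖ := by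
  set v : EuclideanSpace ℝ (Fin d) := (WithLp.equiv 2 _).symm (Pi.single j 1) with hv
  have h : M i j = (Matrix.toEuclideanCLM (𝕜 := ℝ) M v) i := by
    rw [hv, WithLp.equiv_symm_apply, Matrix.toEuclideanCLM_toLp]
    simp [Matrix.mulVec_single]
  have hvnorm : ‖v‖ = 1 := by
    rw [show v = EuclideanSpace.single j (1:ℝ) from rfl, EuclideanSpace.norm_single]
    simp
  rw [h]
  calc |(Matrix.toEuclideanCLM (𝕜 := ℝ) M v) i|
      ≤ ‖Matrix.toEuclideanCLM (𝕜 := ℝ) M v‖ := coord_le_norm _ i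
    _ ≤ ‖Matrix.toEuclideanCLM (𝕜 := ℝ) M‖ * ‖v‖ :=
        (Matrix.toEuclideanCLM (𝕜 := ℝ) M).le_opNorm v
    _ = ‖Matrix.toEuclideanCLM (𝕜 := ℝ) M‖ := by rw [hvnorm, mul_one]

theorem stmt1 (n d : ℕ) (A : Matrix (Fin n) (Fin n) ℝ)
    (W : Matrix (Fin d) (Fin d) ℝ)
    (hnonneg : ∀ i j, 0 ≤ A i j)
    (hrow : ∀ i, ∑ j, A i j = 1)
    (hprim : ∃ L : ℕ, ∀ i j, 0 < (A ^ L) i j)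
    (hW : ‖Matrix.toEuclideanCLM (𝕜 := ℝ) W‖ < 1)
    (H : ℕ → Matrix (Fin n) (Fin d) ℝ)
    (hrec : ∀ l, H (l + 1) = A * H l * W) :
    Tendsto H atTop (𝓝 0) := by
  set r : ℝ := ‖Matrix.toEuclideanCLM (𝕜 := ℝ) W‖ with hr
  have hr0 : 0 ≤ r := norm_nonneg _
  -- closed form
  have hform : ∀ l, H l = A ^ l * H 0 * W ^ l := by
    intro l
    induction l with
    | zero => simp
    | succ l ih =>
      rw [hrec l, ih, pow_succ' A, pow_succ W]
      simp only [Matrix.mul_assoc]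
  -- entry bound on W^l
  have hWpow : ∀ l (i j : Fin d), |(W ^ l) i j| ≤ r ^ l := by
    intro l i j
    have := entry_le_l2norm (W ^ l) i j
    have h2 : ‖Matrix.toEuclideanCLM (𝕜 := ℝ) (W ^ l)‖ ≤ r ^ l := by
      rw [map_pow]
      rcases Nat.eq_zero_or_pos l with h0 | hl
      · subst h0
        rw [pow_zero, pow_zero]
        exact ContinuousLinearMap.norm_id_le.trans_eq rfl
      · exact norm_pow_le' _ hl
    exact this.trans h2
  set c : ℝ := ∑ k : Fin n, ∑ m : Fin d, |H 0 k m| with hc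
  have hc0 : 0 ≤ c := Finset.sum_nonneg fun _ _ => Finset.sum_nonneg fun _ _ => abs_nonneg _
  have hbound : ∀ l (i : Fin n) (j : Fin d), |H l i j| ≤ c * r ^ l := by
    intro l i j
    rw [hform l]
    simp only [Matrix.mul_apply]
    calc |∑ m, (∑ k, (A ^ l) i k * H 0 k m) * (W ^ l) m j|
        ≤ ∑ m, ∑ k, |(A ^ l) i k * H 0 k m * (W ^ l) m j| := by
          refine (Finset.abs_sum_le_sum_abs _ _).trans ?_
          refine Finset.sum_le_sum fun m _ => ?_
          rw [Finset.sum_mul]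
          exact Finset.abs_sum_le_sum_abs _ _
      _ ≤ ∑ m, ∑ k, |H 0 k m| * r ^ l := by
          refine Finset.sum_le_sum fun m _ => Finset.sum_le_sum fun k _ => ?_
          rw [abs_mul, abs_mul]
          have hA1 : |(A ^ l) i k| ≤ 1 := by
            rw [abs_of_nonneg (pow_nonneg_entries A hnonneg l i k)]
            calc (A ^ l) i k ≤ ∑ j, (A ^ l) i j :=
                  Finset.single_le_sum (fun j _ => pow_nonneg_entries A hnonneg l i j)
                    (Finset.mem_univ k)
              _ = 1 := pow_row_sum A hrow l i
          calc |(A ^ l) i k| * |H 0 k m| * |(W ^ l) m j|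
              ≤ 1 * |H 0 k m| * r ^ l := by
                gcongr <;> first
                  | exact hA1
                  | exact hWpow l m j
                  | positivity
            _ = |H 0 k m| * r ^ l := by ring
      _ = (∑ m, ∑ k, |H 0 k m|) * r ^ l := by rw [Finset.sum_mul]; congr 1; ext m; rw [Finset.sum_mul]
      _ = c * r ^ l := by rw [hc, Finset.sum_comm]
  have hto : Tendsto (fun l => c * r ^ l) atTop (𝓝 0) := by
    have := tendsto_pow_atTop_nhds_zero_of_lt_one hr0 hW
    simpa using this.const_mul c
  show @Tendsto ℕ (Fin n → Fin d → ℝ) H atTop (𝓝 (fun _ _ => (0:ℝ)))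
  refine tendsto_pi_nhds.2 ?_
  intro i
  refine tendsto_pi_nhds.2 ?_
  intro j
  exact squeeze_zero_norm (fun l => by simpa using hbound l i j) hto
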